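/- Let V be a real vector space of finite dimension n ≥ 2 and let g be a nondegenerate symmetric bilinear form on V of signature (1, n−1). Let h be any symmetric bilinear form on V such that every vector v with g(v, v) = 0 also satisfies h(v, v) = 0 (i.e. the light cone of g is contained in the null cone of h). Then there exists α ∈ ℝ with h = α·g. -/

import Mathlib

/-- Let `g` be a nondegenerate symmetric bilinear form of signature
`(1, n−1)` on an `n`-dimensional real vector space (`n ≥ 2`), exhibited by a basis `e`
with `g(e_a, e_b) = diag(1, −1, …, −1)`. If a symmetric bilinear form `h` vanishes on the
light cone of `g`, then `h = α·g` for some real `α`. -/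
theorem lightcone_determines_form
    {V : Type*} [AddCommGroup V] [Module ℝ V]
    {n : ℕ} (hn : 2 ≤ n)
    (g h : V →ₗ[ℝ] V →ₗ[ℝ] ℝ)
    (hgsymm : ∀ v w : V, g v w = g w v)
    (hhsymm : ∀ v w : V, h v w = h w v)
    (e : Module.Basis (Fin n) ℝ V)
    (hsig : ∀ i j, g (e i) (e j) =
      if i = j then (if (i : ℕ) = 0 then 1 else -1) else 0)
    (hnull : ∀ v : V, g v v = 0 → h v v = 0) :
    ∃ α : ℝ, ∀ v w : V, h v w = α * g v w := by
  have h0n : 0 < n := by omega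
  set i0 : Fin n := ⟨0, h0n⟩ with hi0
  set α := h (e i0) (e i0) with hα
  -- general expansion lemma for symmetric bilinear forms
  have expand : ∀ (B : V →ₗ[ℝ] V →ₗ[ℝ] ℝ), (∀ v w : V, B v w = B w v) →
      ∀ (s : ℝ) (a b c : V), B (s • a + b + c) (s • a + b + c)
        = s*s*(B a a) + B b b + B c c + 2*s*(B a b) + 2*s*(B a c) + 2*(B b c) := by
    intro B hB s a b c
    simp only [map_add, map_smul, LinearMap.add_apply, LinearMap.smul_apply, smul_eq_mul]
    rw [hB b a, hB c a, hB c b]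
    ring
  have g00 : g (e i0) (e i0) = 1 := by simp [hsig, hi0]
  have h0 : ∀ i, i ≠ i0 → h (e i0) (e i) = 0 ∧ h (e i) (e i) = -α := by
    intro i hi
    have hiv : (i : ℕ) ≠ 0 := fun hv => hi (Fin.ext (by simp [hi0, hv]))
    have g0i : g (e i0) (e i) = 0 := by simp [hsig, (Ne.symm hi)]
    have gii : g (e i) (e i) = -1 := by simp [hsig, hiv]
    have null1 : g ((1:ℝ) • e i0 + e i + 0) ((1:ℝ) • e i0 + e i + 0) = 0 := by
      rw [expand g hgsymm]; simp [g00, g0i, gii]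
    have null2 : g ((1:ℝ) • e i0 + (-e i) + 0) ((1:ℝ) • e i0 + (-e i) + 0) = 0 := by
      rw [expand g hgsymm]; simp [g00, g0i, gii]
    have e1 := hnull _ null1
    have e2 := hnull _ null2
    rw [expand h hhsymm] at e1 e2
    simp only [map_zero, LinearMap.zero_apply, map_neg, LinearMap.neg_apply] at e1 e2
    constructor <;> [linarith; linarith]
  have hoff : ∀ i j, i ≠ i0 → j ≠ i0 → i ≠ j → h (e i) (e j) = 0 := by
    intro i j hi hj hij
    have hiv : (i : ℕ) ≠ 0 := fun hv => hi (Fin.ext (by simp [hi0, hv]))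
    have hjv : (j : ℕ) ≠ 0 := fun hv => hj (Fin.ext (by simp [hi0, hv]))
    have g0i : g (e i0) (e i) = 0 := by simp [hsig, (Ne.symm hi)]
    have g0j : g (e i0) (e j) = 0 := by simp [hsig, (Ne.symm hj)]
    have gii : g (e i) (e i) = -1 := by simp [hsig, hiv]
    have gjj : g (e j) (e j) = -1 := by simp [hsig, hjv]
    have gij : g (e i) (e j) = 0 := by simp [hsig, hij]
    set s : ℝ := Real.sqrt 2 with hs
    have hs2 : s * s = 2 := Real.mul_self_sqrt (by norm_num)
    have null3 : g (s • e i0 + e i + e j) (s • e i0 + e i + e j) = 0 := by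
      rw [expand g hgsymm, g00, g0i, g0j, gii, gjj, gij, hs2]; ring
    have e3 := hnull _ null3
    rw [expand h hhsymm, hs2, (h0 i hi).1, (h0 i hi).2, (h0 j hj).1, (h0 j hj).2] at e3
    linarith
  have key : ∀ i j, h (e i) (e j) = α * g (e i) (e j) := by
    intro i j
    by_cases hi : i = i0 <;> by_cases hj : j = i0
    · subst hi; subst hj; rw [g00]; ring
    · subst hi; rw [(h0 j hj).1]; simp [hsig, Ne.symm hj]
    · subst hj; rw [hhsymm, (h0 i hi).1]; simp [hsig, hi]
    · by_cases hij : i = j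
      · subst hij
        have hiv : (i : ℕ) ≠ 0 := fun hv => hi (Fin.ext (by simp [hi0, hv]))
        rw [(h0 i hi).2]; simp [hsig, hiv]
      · rw [hoff i j hi hj hij]; simp [hsig, hij]
  have heq : h = α • g := e.ext fun i => e.ext fun j => by
    simpa using key i j
  exact ⟨α, fun v w => by rw [heq]; simp⟩
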